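/- For all real numbers R ≥ ε > 0, ν > 0, and t ∈ [0, ν]: e^{νε}·cosh((R−ε)t) ≥ cosh(Rt). -/
import Mathlib

theorem stmt_7 (R ε ν t : ℝ) (hε : 0 < ε) (hR : ε ≤ R) (hν : 0 < ν)
    (ht0 : 0 ≤ t) (htν : t ≤ ν) :
    Real.cosh (R * t) ≤ Real.exp (ν * ε) * Real.cosh ((R - ε) * t) := by
  have h1 : R * t = (R - ε) * t + ε * t := by ring
  rw [h1, Real.cosh_add]
  have hs : Real.sinh ((R - ε) * t) ≤ Real.cosh ((R - ε) * t) := by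
    nlinarith [Real.cosh_sub_sinh ((R - ε) * t), Real.exp_pos (-((R - ε) * t))]
  have hsb : 0 ≤ Real.sinh (ε * t) := by positivity
  have hc : 0 < Real.cosh ((R - ε) * t) := Real.cosh_pos _
  calc Real.cosh ((R-ε)*t) * Real.cosh (ε*t) + Real.sinh ((R-ε)*t) * Real.sinh (ε*t)
      ≤ Real.cosh ((R-ε)*t) * Real.cosh (ε*t) + Real.cosh ((R-ε)*t) * Real.sinh (ε*t) := by
        nlinarith
    _ = Real.cosh ((R-ε)*t) * Real.exp (ε*t) := by
        rw [← mul_add, Real.cosh_add_sinh]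
    _ ≤ Real.exp (ν*ε) * Real.cosh ((R-ε)*t) := by
        have h2 : Real.exp (ε*t) ≤ Real.exp (ν*ε) := Real.exp_le_exp.mpr (by nlinarith)
        nlinarith [Real.exp_pos (ε*t)]
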